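/- Parametrized embedding lemma: let C and D be compact Hausdorff topological spaces, let A be any topological space, and let π : ([0,∞) × (0,∞)) × C → D be a continuous map such that for each (p, q) ∈ [0,∞) × (0,∞) the slice π_{p,q} : C → D, x ↦ π((p,q), x), is surjective. Then the map Φ : [0,∞) × (0,∞) × C(D, A) → [0,∞) × (0,∞) × C(C, A) defined by Φ(p, q, f) = (p, q, f ∘ π_{p,q}) is a topological embedding: it is injective and a homeomorphism onto its image. -/

import Mathlib

open Topology

/-- Parametrized embedding lemma: let `C` and `D` be compact Hausdorff
spaces, `A` any space, and `π : ([0,∞) × (0,∞)) × C → D` continuous with every slice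
`π_{p,q} : C → D` surjective.  Then `Φ(p, q, f) = (p, q, f ∘ π_{p,q})` is a topological
embedding `[0,∞) × (0,∞) × C(D, A) → [0,∞) × (0,∞) × C(C, A)`. -/
theorem parametrized_precomp_isEmbedding {C D A : Type*} [TopologicalSpace C]
    [TopologicalSpace D] [TopologicalSpace A] [CompactSpace C] [T2Space C]
    [CompactSpace D] [T2Space D]
    (π : ({p : ℝ // 0 ≤ p} × {q : ℝ // 0 < q}) × C → D) (hπ : Continuous π)
    (hsurj : ∀ pq : {p : ℝ // 0 ≤ p} × {q : ℝ // 0 < q},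
      Function.Surjective (fun x : C => π (pq, x))) :
    IsEmbedding (fun z : {p : ℝ // 0 ≤ p} × {q : ℝ // 0 < q} × C(D, A) =>
      ((z.1, z.2.1,
        z.2.2.comp ⟨fun x : C => π ((z.1, z.2.1), x),
          hπ.comp (continuous_const.prodMk continuous_id)⟩) :
        {p : ℝ // 0 ≤ p} × {q : ℝ // 0 < q} × C(C, A))) := by
  let σ : {p : ℝ // 0 ≤ p} × {q : ℝ // 0 < q} → C(C, D) := fun t =>
    ⟨fun x => π (t, x), hπ.comp (continuous_const.prodMk continuous_id)⟩
  have hσ : Continuous σ := by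
    have hσeq : σ = fun t =>
        (ContinuousMap.curry ⟨π, hπ⟩ :
          C({p : ℝ // 0 ≤ p} × {q : ℝ // 0 < q}, C(C, D))) t := by
      funext t; ext x; rfl
    rw [hσeq]; exact (ContinuousMap.curry ⟨π, hπ⟩).continuous
  set Φ : {p : ℝ // 0 ≤ p} × {q : ℝ // 0 < q} × C(D, A) →
      {p : ℝ // 0 ≤ p} × {q : ℝ // 0 < q} × C(C, A) :=
    fun z => (z.1, z.2.1, z.2.2.comp (σ (z.1, z.2.1))) with hΦdef
  show IsEmbedding Φ
  have hcont : Continuous Φ := by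
    refine continuous_fst.prodMk ((continuous_fst.comp continuous_snd).prodMk ?_)
    have heq : (fun z : {p : ℝ // 0 ≤ p} × {q : ℝ // 0 < q} × C(D, A) =>
        z.2.2.comp (σ (z.1, z.2.1))) =
        (fun w : C(C, D) × C(D, A) => w.2.comp w.1) ∘
          fun z : {p : ℝ // 0 ≤ p} × {q : ℝ // 0 < q} × C(D, A) =>
            (σ (z.1, z.2.1), z.2.2) := rfl
    rw [heq]
    exact ContinuousMap.continuous_comp'.comp
      ((hσ.comp (continuous_fst.prodMk (continuous_fst.comp continuous_snd))).prodMk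
        (continuous_snd.comp continuous_snd))
  have hinj : Function.Injective Φ := by
    rintro ⟨p, q, f⟩ ⟨p', q', f'⟩ h
    obtain ⟨h1, h2, h3⟩ : p = p' ∧ q = q' ∧ f.comp (σ (p, q)) = f'.comp (σ (p', q')) := by
      simpa [Φ, Prod.ext_iff] using h
    subst h1; subst h2
    refine Prod.ext rfl (Prod.ext rfl ?_)
    ext y
    obtain ⟨x, hx⟩ := hsurj (p, q) y
    have hax := congrArg (fun g : C(C, A) => g x) h3
    simp only [ContinuousMap.comp_apply] at hax
    have hσx : σ (p, q) x = y := hx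
    rwa [hσx] at hax
  refine ⟨?_, hinj⟩
  rw [isInducing_iff_nhds]
  rintro ⟨p, q, f⟩
  refine le_antisymm (Filter.map_le_iff_le_comap.mp (hcont.tendsto _)) ?_
  conv_rhs => rw [nhds_prod_eq, nhds_prod_eq, Filter.prod_eq_inf, Filter.prod_eq_inf,
    Filter.comap_inf]
  refine le_inf ?_ (le_inf ?_ ?_)
  · have h1 : 𝓝 (Φ (p, q, f)) ≤ Filter.comap Prod.fst (𝓝 p) :=
      Filter.map_le_iff_le_comap.mp (continuous_fst.tendsto _)
    calc Filter.comap Φ (𝓝 (Φ (p, q, f)))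
        ≤ Filter.comap Φ (Filter.comap Prod.fst (𝓝 p)) := Filter.comap_mono h1
      _ = Filter.comap Prod.fst (𝓝 p) := Filter.comap_comap
  · have h1 : 𝓝 (Φ (p, q, f)) ≤
        Filter.comap (fun w : {p : ℝ // 0 ≤ p} × {q : ℝ // 0 < q} × C(C, A) => w.2.1)
          (𝓝 q) :=
      Filter.map_le_iff_le_comap.mp ((continuous_fst.comp continuous_snd).tendsto _)
    calc Filter.comap Φ (𝓝 (Φ (p, q, f)))
        ≤ Filter.comap Φ
            (Filter.comap (fun w : {p : ℝ // 0 ≤ p} × {q : ℝ // 0 < q} × C(C, A) => w.2.1)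
              (𝓝 q)) := Filter.comap_mono h1
      _ = Filter.comap Prod.snd (Filter.comap Prod.fst (𝓝 q)) := by
          rw [Filter.comap_comap, Filter.comap_comap]; rfl
  · -- the essential third coordinate
    rw [ContinuousMap.nhds_compactOpen]
    simp only [Filter.comap_iInf, Filter.comap_principal]
    refine le_iInf fun K => le_iInf fun hK => le_iInf fun U => le_iInf fun hU =>
      le_iInf fun hf => ?_
    rw [Filter.le_principal_iff, Filter.mem_comap]
    have hπt : Continuous fun x : C => π ((p, q), x) :=
      hπ.comp (continuous_const.prodMk continuous_id)
    have hKcl : IsClosed K := hK.isClosed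
    have hScomp : IsCompact ((fun x : C => π ((p, q), x)) ⁻¹' K) :=
      (hKcl.preimage hπt).isCompact
    have hOopen : IsOpen ((fun x : C => π ((p, q), x)) ⁻¹' (f ⁻¹' U)) :=
      (hU.preimage f.continuous).preimage hπt
    have hSO : (fun x : C => π ((p, q), x)) ⁻¹' K ⊆
        (fun x : C => π ((p, q), x)) ⁻¹' (f ⁻¹' U) := fun x hx => hf hx
    obtain ⟨L, hLcomp, hSL, hLO⟩ := exists_compact_between hScomp hOopen hSO
    -- the bad set and its complement
    set B : Set ({p : ℝ // 0 ≤ p} × {q : ℝ // 0 < q}) :=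
      Prod.fst '' {tx : ({p : ℝ // 0 ≤ p} × {q : ℝ // 0 < q}) × C |
        tx.2 ∈ (interior L)ᶜ ∧ π tx ∈ K} with hBdef
    have hBclosed : IsClosed B :=
      isClosedMap_fst_of_compactSpace _
        (((isClosed_compl_iff.2 isOpen_interior).preimage continuous_snd).inter
          (hKcl.preimage hπ))
    have htN : (p, q) ∉ B := by
      rintro ⟨⟨t, x⟩, ⟨hxM, hxK⟩, htx⟩
      obtain rfl : t = (p, q) := htx
      exact hxM (hSL hxK)
    refine ⟨(fun w : {p : ℝ // 0 ≤ p} × {q : ℝ // 0 < q} × C(C, A) => (w.1, w.2.1)) ⁻¹' Bᶜ ∩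
      (fun w : {p : ℝ // 0 ≤ p} × {q : ℝ // 0 < q} × C(C, A) => w.2.2) ⁻¹'
        {g : C(C, A) | Set.MapsTo g L U}, ?_, ?_⟩
    · refine Filter.inter_mem ?_ ?_
      · exact (hBclosed.isOpen_compl.preimage
          (continuous_fst.prodMk (continuous_fst.comp continuous_snd))).mem_nhds htN
      · refine ((ContinuousMap.isOpen_setOf_mapsTo hLcomp hU).preimage
          (continuous_snd.comp continuous_snd)).mem_nhds ?_
        intro x hx
        exact hLO hx
    · rintro ⟨p', q', f'⟩ ⟨hN', hL'⟩ y hyK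
      obtain ⟨x, hx⟩ := hsurj (p', q') y
      have hxint : x ∈ interior L := by
        by_contra hxc
        exact hN' ⟨((p', q'), x), ⟨hxc, by simpa [hx] using hyK⟩, rfl⟩
      have hfx := hL' (interior_subset hxint)
      simp only [hΦdef, ContinuousMap.comp_apply] at hfx
      have hσx : σ (p', q') x = y := hx
      rwa [hσx] at hfx
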